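/- arXiv:2307.04093 — 2 statements merged into one kernel-verified Lean document; each statement's English description precedes it below -/
import Mathlib

section
/- Let G be a graph and D_G the set consisting of all edge indicators Ind[e], all single-coordinate perturbations Ind[e]^{⊕i} for the two 1-coordinates i of each edge indicator, and the all-zeros string. Then every certificate for IsEdge_G over D_G on the all-zeros input consists of negated literals whose variables form a vertex cover of G. -/
open Classical

/-- Indicator string of an edge e: 1 exactly on the two endpoints of e. -/
noncomputable def edgeInd {n : ℕ} (e : Sym2 (Fin n)) : Fin n → Bool :=
  fun i => decide (i ∈ e)

noncomputable def isEdge {n : ℕ} (G : SimpleGraph (Fin n)) (x : Fin n → Bool) : Bool :=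
  decide (∃ e ∈ G.edgeSet, x = edgeInd e)

/-- The coreset D_G: edge indicators, flips of their 1-coordinates, and the zero string. -/
noncomputable def DG {n : ℕ} (G : SimpleGraph (Fin n)) : Set (Fin n → Bool) :=
  {x | ∃ e ∈ G.edgeSet, x = edgeInd e} ∪
  {x | ∃ e ∈ G.edgeSet, ∃ i, i ∈ e ∧ x = Function.update (edgeInd e) i false} ∪
  {fun _ => false}

lemma isEdge_zero {n : ℕ} (G : SimpleGraph (Fin n)) :
    isEdge G (fun _ => false) = false := by
  simp only [isEdge, decide_eq_false_iff_not]
  rintro ⟨e, he, hx⟩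
  induction e with
  | h u v =>
    have h2 : (fun _ => false : Fin n → Bool) u = edgeInd s(u, v) u := by rw [hx]
    simp [edgeInd] at h2

/-- every certificate for IsEdge_G over D_G on the all-zeros input consists of
negated literals whose variables form a vertex cover of G. -/
theorem stmt14 {n : ℕ} (G : SimpleGraph (Fin n)) (ρ : Finset (Fin n × Bool))
    (hcons : ∀ p ∈ ρ, (fun _ => false : Fin n → Bool) p.1 = p.2)
    (hcert : ∀ y ∈ DG G, (∀ p ∈ ρ, y p.1 = p.2) →
      isEdge G y = isEdge G (fun _ => false)) :
    (∀ p ∈ ρ, p.2 = false) ∧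
    (∀ ⦃u v : Fin n⦄, G.Adj u v → (∃ b, (u, b) ∈ ρ) ∨ (∃ b, (v, b) ∈ ρ)) := by
  constructor
  · exact fun p hp => (hcons p hp).symm
  · intro u v huv
    by_contra h
    push_neg at h
    obtain ⟨hu, hv⟩ := h
    have hy : edgeInd s(u, v) ∈ DG G := by
      left; left
      exact ⟨s(u, v), huv, rfl⟩
    have hconsρ : ∀ p ∈ ρ, edgeInd s(u, v) p.1 = p.2 := by
      intro p hp
      have hpf : p.2 = false := (hcons p hp).symm
      rw [hpf]
      simp only [edgeInd, decide_eq_false_iff_not, Sym2.mem_iff]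
      rintro (rfl | rfl)
      · exact hu p.2 (by simpa using hp)
      · exact hv p.2 (by simpa using hp)
    have := hcert _ hy hconsρ
    rw [isEdge_zero] at this
    have htrue : isEdge G (edgeInd s(u, v)) = true := by
      simp only [isEdge, decide_eq_true_iff]
      exact ⟨s(u, v), huv, rfl⟩
    rw [htrue] at this
    exact absurd this (by simp)
end

section
/- Let G be a graph with m edges, and suppose every vertex cover of G has size at least k'. Let D_G be the set consisting of all edge indicators, all single-coordinate perturbations of the 1-coordinates of edge indicators, and the all-zeros string. Then every decision tree agreeing with IsEdge_G on all of D_G has size at least k' + m. -/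
open Classical

inductive DTree (α : Type) : Type where
  | leaf (b : Bool) : DTree α
  | node (i : α) (l r : DTree α) : DTree α

def DTree.eval {α : Type} : DTree α → (α → Bool) → Bool
  | .leaf b, _ => b
  | .node i l r, x => if x i then r.eval x else l.eval x

def DTree.size {α : Type} : DTree α → ℕ
  | .leaf _ => 0
  | .node _ l r => 1 + l.size + r.size

/-- Number of leaves of a decision tree. -/
def DTree.leaves {α : Type} : DTree α → ℕ
  | .leaf _ => 1
  | .node _ l r => l.leaves + r.leaves

lemma DTree.leaves_eq_size_add_one {α : Type} (T : DTree α) : T.leaves = T.size + 1 := by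
  induction T with
  | leaf b => rfl
  | node i l r ihl ihr => simp only [DTree.leaves, DTree.size, ihl, ihr]; omega

lemma edgeInd_true {n : ℕ} {e : Sym2 (Fin n)} {q : Fin n} (h : q ∈ e) : edgeInd e q = true := by
  simp [edgeInd, h]

lemma edgeInd_false {n : ℕ} {e : Sym2 (Fin n)} {q : Fin n} (h : q ∉ e) : edgeInd e q = false := by
  simp [edgeInd, h]

/-- Inner counting lemma: if every edge indicator in `F` evaluates to true on `r`, each has a
live perturbation evaluating to false, and every dead perturbation coordinate is shared by all
edges of `F`, then `r` has at least `F.card + 1` leaves. -/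
lemma lemC {n : ℕ} (r : DTree (Fin n)) (F : Finset (Sym2 (Fin n)))
    (hnl : ∀ e ∈ F, ¬ e.IsDiag)
    (htrue : ∀ e ∈ F, r.eval (edgeInd e) = true)
    (hlive : ∀ e ∈ F, ∃ j ∈ e, r.eval (Function.update (edgeInd e) j false) = false)
    (hshare : ∀ e ∈ F, ∀ f ∈ F, ∀ j ∈ e,
      r.eval (Function.update (edgeInd e) j false) = true → j ∈ f) :
    F.card + 1 ≤ r.leaves := by
  induction r generalizing F with
  | leaf b =>
    rcases F.eq_empty_or_nonempty with h | ⟨e, he⟩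
    · simp [h, DTree.leaves]
    · obtain ⟨j, hj, hje⟩ := hlive e he
      have h1 := htrue e he
      simp only [DTree.eval] at h1 hje
      rw [h1] at hje; exact absurd hje (by simp)
  | node q l rr ihl ihr =>
    classical
    set Fl := F.filter (fun e => ¬ q ∈ e) with hFldef
    set Fr := F.filter (fun e => q ∈ e) with hFrdef
    set Fr' := Fr.filter
      (fun e => ∃ j ∈ e, rr.eval (Function.update (edgeInd e) j false) = false) with hFr'def
    -- membership unpacking helpers
    have memFl : ∀ {e}, e ∈ Fl → e ∈ F ∧ q ∉ e := fun h => Finset.mem_filter.mp h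
    have memFr : ∀ {e}, e ∈ Fr → e ∈ F ∧ q ∈ e := fun h => Finset.mem_filter.mp h
    -- eval of the node on inputs, depending on the value at q
    have evalT : ∀ x : Fin n → Bool, x q = true →
        (DTree.node q l rr).eval x = rr.eval x := by
      intro x hx; simp [DTree.eval, hx]
    have evalF : ∀ x : Fin n → Bool, x q = false →
        (DTree.node q l rr).eval x = l.eval x := by
      intro x hx; simp [DTree.eval, hx]
    -- value at q of perturbed indicators
    have updT : ∀ (e : Sym2 (Fin n)) (j : Fin n), q ∈ e → q ≠ j →
        Function.update (edgeInd e) j false q = true := by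
      intro e j hq hqj
      rw [Function.update_of_ne hqj]; exact edgeInd_true hq
    have updF : ∀ (e : Sym2 (Fin n)) (j : Fin n), q ∉ e →
        Function.update (edgeInd e) j false q = false := by
      intro e j hq
      by_cases hqj : q = j
      · subst hqj; simp
      · rw [Function.update_of_ne hqj]; exact edgeInd_false hq
    -- left subtree
    have hL : Fl.card + 1 ≤ l.leaves := by
      apply ihl Fl
      · intro e he; exact hnl e (memFl he).1
      · intro e he
        obtain ⟨heF, hq⟩ := memFl he
        have := htrue e heF
        rwa [evalF _ (edgeInd_false hq)] at this
      · intro e he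
        obtain ⟨heF, hq⟩ := memFl he
        obtain ⟨j, hj, hje⟩ := hlive e heF
        refine ⟨j, hj, ?_⟩
        rwa [evalF _ (updF e j hq)] at hje
      · intro e he f hf j hj hev
        obtain ⟨heF, hq⟩ := memFl he
        refine hshare e heF f (memFl hf).1 j hj ?_
        rwa [evalF _ (updF e j hq)]
    -- right subtree
    have hR : Fr'.card + 1 ≤ rr.leaves := by
      apply ihr Fr'
      · intro e he; exact hnl e (memFr (Finset.mem_filter.mp he).1).1
      · intro e he
        obtain ⟨heF, hq⟩ := memFr (Finset.mem_filter.mp he).1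
        have := htrue e heF
        rwa [evalT _ (edgeInd_true hq)] at this
      · intro e he; exact (Finset.mem_filter.mp he).2
      · intro e he f hf j hj hev
        have heFr := (Finset.mem_filter.mp he).1
        obtain ⟨heF, hq⟩ := memFr heFr
        by_cases hjq : j = q
        · subst hjq; exact (memFr (Finset.mem_filter.mp hf).1).2
        · refine hshare e heF f (memFr (Finset.mem_filter.mp hf).1).1 j hj ?_
          rwa [evalT _ (updT e j hq (Ne.symm hjq))]
    -- at most one edge of Fr is dropped in Fr'
    have hsub : Fr' ⊆ Fr := Finset.filter_subset _ _
    have hone : (Fr \ Fr').card ≤ 1 := by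
      rw [Finset.card_le_one]
      intro e0 he0 e1 he1
      obtain ⟨he0r, he0n⟩ := Finset.mem_sdiff.mp he0
      obtain ⟨he1r, he1n⟩ := Finset.mem_sdiff.mp he1
      obtain ⟨he0F, hq0⟩ := memFr he0r
      obtain ⟨he1F, hq1⟩ := memFr he1r
      -- all perturbations of e0, e1 evaluate true in rr
      have hall0 : ∀ j ∈ e0, rr.eval (Function.update (edgeInd e0) j false) = true := by
        intro j hj
        by_contra hc
        exact he0n (Finset.mem_filter.mpr ⟨he0r, ⟨j, hj, by simpa using hc⟩⟩)
      have hall1 : ∀ j ∈ e1, rr.eval (Function.update (edgeInd e1) j false) = true := by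
        intro j hj
        by_contra hc
        exact he1n (Finset.mem_filter.mpr ⟨he1r, ⟨j, hj, by simpa using hc⟩⟩)
      -- other endpoints
      set a := Sym2.Mem.other hq0 with ha
      set b := Sym2.Mem.other hq1 with hb
      have haq : a ≠ q := Sym2.other_ne (hnl e0 he0F) hq0
      have hbq : b ≠ q := Sym2.other_ne (hnl e1 he1F) hq1
      have hamem : a ∈ e0 := Sym2.other_mem hq0
      have hbmem : b ∈ e1 := Sym2.other_mem hq1
      have ha1 : a ∈ e1 := by
        refine hshare e0 he0F e1 he1F a hamem ?_
        rw [evalT _ (updT e0 a hq0 (Ne.symm haq))]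
        exact hall0 a hamem
      have hspec0 : s(q, a) = e0 := Sym2.other_spec hq0
      have hspec1 : s(q, b) = e1 := Sym2.other_spec hq1
      have hab : a = b := by
        rw [← hspec1, Sym2.mem_iff] at ha1
        rcases ha1 with h | h
        · exact absurd h haq
        · exact h
      rw [← hspec0, ← hspec1, hab]
    have hcard : Fr.card ≤ Fr'.card + 1 := by
      have := Finset.card_sdiff_add_card_eq_card hsub
      omega
    have hFcard : Fr.card + Fl.card = F.card := by
      rw [hFrdef, hFldef]
      exact Finset.card_filter_add_card_filter_not _
    simp only [DTree.leaves]
    omega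

/-- Outer lemma: following the all-zeros path collects a vertex cover. -/
lemma lemB {n : ℕ} (T : DTree (Fin n)) (E : Finset (Sym2 (Fin n)))
    (hnl : ∀ e ∈ E, ¬ e.IsDiag)
    (h0 : T.eval (fun _ => false) = false)
    (h1 : ∀ e ∈ E, T.eval (edgeInd e) = true)
    (h2 : ∀ e ∈ E, ∀ j ∈ e, T.eval (Function.update (edgeInd e) j false) = false) :
    ∃ C : Finset (Fin n), (∀ e ∈ E, ∃ i ∈ C, i ∈ e) ∧ C.card + E.card ≤ T.size := by
  induction T generalizing E with
  | leaf b =>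
    have hb : b = false := h0
    have hE : E = ∅ := by
      by_contra h
      obtain ⟨e, he⟩ := Finset.nonempty_of_ne_empty h
      have := h1 e he
      simp only [DTree.eval, hb] at this
      exact absurd this (by simp)
    exact ⟨∅, by simp [hE, DTree.size]⟩
  | node q l rr ihl ihr =>
    classical
    set El := E.filter (fun e => ¬ q ∈ e) with hEldef
    set Er := E.filter (fun e => q ∈ e) with hErdef
    have evalT : ∀ x : Fin n → Bool, x q = true →
        (DTree.node q l rr).eval x = rr.eval x := by
      intro x hx; simp [DTree.eval, hx]
    have evalF : ∀ x : Fin n → Bool, x q = false →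
        (DTree.node q l rr).eval x = l.eval x := by
      intro x hx; simp [DTree.eval, hx]
    have updT : ∀ (e : Sym2 (Fin n)) (j : Fin n), q ∈ e → q ≠ j →
        Function.update (edgeInd e) j false q = true := by
      intro e j hq hqj
      rw [Function.update_of_ne hqj]; exact edgeInd_true hq
    have updF : ∀ (e : Sym2 (Fin n)) (j : Fin n), q ∉ e →
        Function.update (edgeInd e) j false q = false := by
      intro e j hq
      by_cases hqj : q = j
      · subst hqj; simp
      · rw [Function.update_of_ne hqj]; exact edgeInd_false hq
    -- left recursion on El
    obtain ⟨C, hCcov, hCcard⟩ := ihl El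
      (fun e he => hnl e (Finset.mem_filter.mp he).1)
      (by rwa [evalF _ rfl] at h0)
      (by
        intro e he
        obtain ⟨heF, hq⟩ := Finset.mem_filter.mp he
        have := h1 e heF
        rwa [evalF _ (edgeInd_false hq)] at this)
      (by
        intro e he j hj
        obtain ⟨heF, hq⟩ := Finset.mem_filter.mp he
        have := h2 e heF j hj
        rwa [evalF _ (updF e j hq)] at this)
    -- right subtree bound via lemC
    have hEr : Er.card + 1 ≤ rr.leaves := by
      apply lemC rr Er
      · intro e he; exact hnl e (Finset.mem_filter.mp he).1
      · intro e he
        obtain ⟨heF, hq⟩ := Finset.mem_filter.mp he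
        have := h1 e heF
        rwa [evalT _ (edgeInd_true hq)] at this
      · intro e he
        obtain ⟨heF, hq⟩ := Finset.mem_filter.mp he
        have hj : Sym2.Mem.other hq ∈ e := Sym2.other_mem hq
        refine ⟨Sym2.Mem.other hq, hj, ?_⟩
        have hne : Sym2.Mem.other hq ≠ q := Sym2.other_ne (hnl e heF) hq
        have := h2 e heF _ hj
        rwa [evalT _ (updT e _ hq (Ne.symm hne))] at this
      · intro e he f hf j hj hev
        obtain ⟨heF, hq⟩ := Finset.mem_filter.mp he
        by_cases hjq : j = q
        · subst hjq; exact (Finset.mem_filter.mp hf).2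
        · exfalso
          have := h2 e heF j hj
          rw [evalT _ (updT e j hq (Ne.symm hjq))] at this
          rw [this] at hev
          exact absurd hev (by simp)
    have hErsize : Er.card ≤ rr.size := by
      have := rr.leaves_eq_size_add_one
      omega
    refine ⟨insert q C, ?_, ?_⟩
    · intro e he
      by_cases hq : q ∈ e
      · exact ⟨q, Finset.mem_insert_self _ _, hq⟩
      · obtain ⟨i, hiC, hie⟩ := hCcov e (Finset.mem_filter.mpr ⟨he, hq⟩)
        exact ⟨i, Finset.mem_insert_of_mem hiC, hie⟩
    · have hins : (insert q C).card ≤ C.card + 1 := Finset.card_insert_le _ _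
      have hEcard : Er.card + El.card = E.card := by
        rw [hErdef, hEldef]
        exact Finset.card_filter_add_card_filter_not _
      simp only [DTree.size]
      omega

/-- if every vertex cover of G (m edges) has size at least k', then every
decision tree agreeing with IsEdge_G on all of the coreset D_G has size at least k' + m. -/
theorem stmt15 {n : ℕ} (G : SimpleGraph (Fin n)) [DecidableRel G.Adj] (k' : ℕ)
    (hk : ∀ C : Finset (Fin n), (∀ ⦃u v : Fin n⦄, G.Adj u v → u ∈ C ∨ v ∈ C) → k' ≤ C.card)
    (T : DTree (Fin n)) (hT : ∀ x ∈ DG G, T.eval x = isEdge G x) :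
    k' + G.edgeFinset.card ≤ T.size := by
  classical
  have hnl : ∀ e ∈ G.edgeFinset, ¬ e.IsDiag := by
    intro e he
    exact G.not_isDiag_of_mem_edgeSet (SimpleGraph.mem_edgeFinset.mp he)
  -- the three agreement hypotheses
  have h0 : T.eval (fun _ => false) = false := by
    have hmem : (fun _ : Fin n => false) ∈ DG G := Or.inr rfl
    rw [hT _ hmem]
    simp only [isEdge, decide_eq_false_iff_not]
    rintro ⟨e, he, hx⟩
    induction e using Sym2.ind with
    | _ u v =>
      have : (fun _ : Fin n => false) u = edgeInd s(u, v) u := by rw [hx]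
      rw [edgeInd_true (Sym2.mem_mk_left u v)] at this
      exact absurd this (by simp)
  have h1 : ∀ e ∈ G.edgeFinset, T.eval (edgeInd e) = true := by
    intro e he
    have heS : e ∈ G.edgeSet := SimpleGraph.mem_edgeFinset.mp he
    have hmem : edgeInd e ∈ DG G := Or.inl (Or.inl ⟨e, heS, rfl⟩)
    rw [hT _ hmem]
    simp only [isEdge, decide_eq_true_eq]
    exact ⟨e, heS, rfl⟩
  have h2 : ∀ e ∈ G.edgeFinset, ∀ j ∈ e,
      T.eval (Function.update (edgeInd e) j false) = false := by
    intro e he j hj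
    have heS : e ∈ G.edgeSet := SimpleGraph.mem_edgeFinset.mp he
    have hmem : Function.update (edgeInd e) j false ∈ DG G :=
      Or.inl (Or.inr ⟨e, heS, j, hj, rfl⟩)
    rw [hT _ hmem]
    simp only [isEdge, decide_eq_false_iff_not]
    rintro ⟨f, hf, hx⟩
    induction f using Sym2.ind with
    | _ u v =>
      have huv : u ≠ v := by
        intro h
        exact (G.not_isDiag_of_mem_edgeSet hf) (by rw [h]; exact Sym2.mk_isDiag_iff.mpr rfl)
      have hvalu : Function.update (edgeInd e) j false u = true := by
        rw [hx]; exact edgeInd_true (Sym2.mem_mk_left u v)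
      have hvalv : Function.update (edgeInd e) j false v = true := by
        rw [hx]; exact edgeInd_true (Sym2.mem_mk_right u v)
      have hju : j ≠ u := by
        intro h; subst h; simp at hvalu
      have hjv : j ≠ v := by
        intro h; subst h; simp at hvalv
      have hue : u ∈ e := by
        rw [Function.update_of_ne (Ne.symm hju)] at hvalu
        simpa [edgeInd] using hvalu
      have hve : v ∈ e := by
        rw [Function.update_of_ne (Ne.symm hjv)] at hvalv
        simpa [edgeInd] using hvalv
      have hef : e = s(u, v) :=
        Sym2.eq_of_ne_mem huv hue hve (Sym2.mem_mk_left u v) (Sym2.mem_mk_right u v)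
      have hjf : j ∈ s(u, v) := hef ▸ hj
      rw [Sym2.mem_iff] at hjf
      rcases hjf with h | h
      · exact hju h
      · exact hjv h
  obtain ⟨C, hCcov, hCcard⟩ := lemB T G.edgeFinset hnl h0 h1 h2
  have hcover : ∀ ⦃u v : Fin n⦄, G.Adj u v → u ∈ C ∨ v ∈ C := by
    intro u v huv
    obtain ⟨i, hiC, hie⟩ := hCcov s(u, v) (SimpleGraph.mem_edgeFinset.mpr huv)
    rw [Sym2.mem_iff] at hie
    rcases hie with h | h
    · exact Or.inl (h ▸ hiC)
    · exact Or.inr (h ▸ hiC)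
  have := hk C hcover
  omega
end
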